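/- The 8×8 matrix of linear forms M(x₀,x₁,x₂) = [[0,x₂,−x₁,0,0,0,0,0],[−x₂,0,x₀,0,0,−x₁,0,0],[x₁,−x₀,0,0,x₂,0,0,0],[0,0,0,x₁,0,0,−x₀,0],[0,0,0,x₂,0,0,0,−x₀],[0,0,0,0,x₀,0,−x₁,0],[0,0,0,0,0,x₀,0,−x₂],[0,0,0,0,0,0,x₂,−x₁]] has rank exactly 6 for every (x₀,x₁,x₂) ∈ ℂ³ with (x₀,x₁,x₂) ≠ (0,0,0). -/

import Mathlib

open Matrix

set_option maxHeartbeats 1000000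

private lemma cvv_1_1 {α : Type*} (a : α) (u : Fin 1 → α) : vecCons a u 1 = u 0 := rfl
private lemma cvv_2_1 {α : Type*} (a : α) (u : Fin 2 → α) : vecCons a u 1 = u 0 := rfl
private lemma cvv_2_2 {α : Type*} (a : α) (u : Fin 2 → α) : vecCons a u 2 = u 1 := rfl
private lemma cvv_3_1 {α : Type*} (a : α) (u : Fin 3 → α) : vecCons a u 1 = u 0 := rfl
private lemma cvv_3_2 {α : Type*} (a : α) (u : Fin 3 → α) : vecCons a u 2 = u 1 := rfl
private lemma cvv_3_3 {α : Type*} (a : α) (u : Fin 3 → α) : vecCons a u 3 = u 2 := rfl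
private lemma cvv_4_1 {α : Type*} (a : α) (u : Fin 4 → α) : vecCons a u 1 = u 0 := rfl
private lemma cvv_4_2 {α : Type*} (a : α) (u : Fin 4 → α) : vecCons a u 2 = u 1 := rfl
private lemma cvv_4_3 {α : Type*} (a : α) (u : Fin 4 → α) : vecCons a u 3 = u 2 := rfl
private lemma cvv_4_4 {α : Type*} (a : α) (u : Fin 4 → α) : vecCons a u 4 = u 3 := rfl
private lemma cvv_5_1 {α : Type*} (a : α) (u : Fin 5 → α) : vecCons a u 1 = u 0 := rfl
private lemma cvv_5_2 {α : Type*} (a : α) (u : Fin 5 → α) : vecCons a u 2 = u 1 := rfl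
private lemma cvv_5_3 {α : Type*} (a : α) (u : Fin 5 → α) : vecCons a u 3 = u 2 := rfl
private lemma cvv_5_4 {α : Type*} (a : α) (u : Fin 5 → α) : vecCons a u 4 = u 3 := rfl
private lemma cvv_5_5 {α : Type*} (a : α) (u : Fin 5 → α) : vecCons a u 5 = u 4 := rfl
private lemma cvv_6_1 {α : Type*} (a : α) (u : Fin 6 → α) : vecCons a u 1 = u 0 := rfl
private lemma cvv_6_2 {α : Type*} (a : α) (u : Fin 6 → α) : vecCons a u 2 = u 1 := rfl
private lemma cvv_6_3 {α : Type*} (a : α) (u : Fin 6 → α) : vecCons a u 3 = u 2 := rfl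
private lemma cvv_6_4 {α : Type*} (a : α) (u : Fin 6 → α) : vecCons a u 4 = u 3 := rfl
private lemma cvv_6_5 {α : Type*} (a : α) (u : Fin 6 → α) : vecCons a u 5 = u 4 := rfl
private lemma cvv_6_6 {α : Type*} (a : α) (u : Fin 6 → α) : vecCons a u 6 = u 5 := rfl
private lemma cvv_7_1 {α : Type*} (a : α) (u : Fin 7 → α) : vecCons a u 1 = u 0 := rfl
private lemma cvv_7_2 {α : Type*} (a : α) (u : Fin 7 → α) : vecCons a u 2 = u 1 := rfl
private lemma cvv_7_3 {α : Type*} (a : α) (u : Fin 7 → α) : vecCons a u 3 = u 2 := rfl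
private lemma cvv_7_4 {α : Type*} (a : α) (u : Fin 7 → α) : vecCons a u 4 = u 3 := rfl
private lemma cvv_7_5 {α : Type*} (a : α) (u : Fin 7 → α) : vecCons a u 5 = u 4 := rfl
private lemma cvv_7_6 {α : Type*} (a : α) (u : Fin 7 → α) : vecCons a u 6 = u 5 := rfl
private lemma cvv_7_7 {α : Type*} (a : α) (u : Fin 7 → α) : vecCons a u 7 = u 6 := rfl

private lemma vec6_two {α : Type*} (a b c d e f : α) : ![a,b,c,d,e,f] 2 = c := rfl
private lemma vec6_three {α : Type*} (a b c d e f : α) : ![a,b,c,d,e,f] 3 = d := rfl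
private lemma vec6_four {α : Type*} (a b c d e f : α) : ![a,b,c,d,e,f] 4 = e := rfl
private lemma vec6_five {α : Type*} (a b c d e f : α) : ![a,b,c,d,e,f] 5 = f := rfl
private lemma vec8_two {α : Type*} (a b c d e f g h : α) : ![a,b,c,d,e,f,g,h] 2 = c := rfl
private lemma vec8_three {α : Type*} (a b c d e f g h : α) : ![a,b,c,d,e,f,g,h] 3 = d := rfl
private lemma vec8_four {α : Type*} (a b c d e f g h : α) : ![a,b,c,d,e,f,g,h] 4 = e := rfl
private lemma vec8_five {α : Type*} (a b c d e f g h : α) : ![a,b,c,d,e,f,g,h] 5 = f := rfl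
private lemma vec8_six {α : Type*} (a b c d e f g h : α) : ![a,b,c,d,e,f,g,h] 6 = g := rfl
private lemma vec8_seven {α : Type*} (a b c d e f g h : α) : ![a,b,c,d,e,f,g,h] 7 = h := rfl

private lemma aux_rank_ge {A : Matrix (Fin 8) (Fin 8) ℂ} (f g : Fin 6 → Fin 8)
    (hu : IsUnit (A.submatrix f g)) : 6 ≤ A.rank := by
  rw [Matrix.rank_eq_finrank_span_cols]
  have hB : LinearIndependent ℂ (fun j => (A.submatrix f g)ᵀ j) :=
    Matrix.linearIndependent_cols_iff_isUnit.2 hu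
  have hA : LinearIndependent ℂ (fun j : Fin 6 => Aᵀ (g j)) :=
    LinearIndependent.of_comp (LinearMap.funLeft ℂ ℂ f) hB
  have hmem : ∀ j, Aᵀ (g j) ∈ Submodule.span ℂ (Set.range Aᵀ) :=
    fun j => Submodule.subset_span ⟨g j, rfl⟩
  have hsub : LinearIndependent ℂ
      (fun j : Fin 6 => (⟨Aᵀ (g j), hmem j⟩ : Submodule.span ℂ (Set.range Aᵀ))) :=
    LinearIndependent.of_comp (Submodule.span ℂ (Set.range Aᵀ)).subtype hA
  exact (by simpa using hsub.fintype_card_le_finrank :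
    6 ≤ Module.finrank ℂ (Submodule.span ℂ (Set.range Aᵀ)))

private lemma aux_isUnit {B C : Matrix (Fin 6) (Fin 6) ℂ} {c : ℂ} (hc : c ≠ 0)
    (h : B * C = c • 1) : IsUnit B := by
  rw [Matrix.isUnit_iff_isUnit_det]
  have hdet : B.det * C.det = c ^ 6 := by
    rw [← Matrix.det_mul, h]
    simp [Matrix.det_smul]
  exact isUnit_of_mul_isUnit_left (hdet ▸ (IsUnit.pow 6 hc.isUnit))

theorem stmt2 (x₀ x₁ x₂ : ℂ) (h : (x₀, x₁, x₂) ≠ (0, 0, 0)) :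
    (!![0, x₂, -x₁, 0, 0, 0, 0, 0;
       -x₂, 0, x₀, 0, 0, -x₁, 0, 0;
       x₁, -x₀, 0, 0, x₂, 0, 0, 0;
       0, 0, 0, x₁, 0, 0, -x₀, 0;
       0, 0, 0, x₂, 0, 0, 0, -x₀;
       0, 0, 0, 0, x₀, 0, -x₁, 0;
       0, 0, 0, 0, 0, x₀, 0, -x₂;
       0, 0, 0, 0, 0, 0, x₂, -x₁] : Matrix (Fin 8) (Fin 8) ℂ).rank = 6 := by
  set A : Matrix (Fin 8) (Fin 8) ℂ :=
    !![0, x₂, -x₁, 0, 0, 0, 0, 0;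
       -x₂, 0, x₀, 0, 0, -x₁, 0, 0;
       x₁, -x₀, 0, 0, x₂, 0, 0, 0;
       0, 0, 0, x₁, 0, 0, -x₀, 0;
       0, 0, 0, x₂, 0, 0, 0, -x₀;
       0, 0, 0, 0, x₀, 0, -x₁, 0;
       0, 0, 0, 0, 0, x₀, 0, -x₂;
       0, 0, 0, 0, 0, 0, x₂, -x₁] with hAdef
  have hcases : x₀ ≠ 0 ∨ x₁ ≠ 0 ∨ x₂ ≠ 0 := by
    by_contra hc
    push_neg at hc
    exact h (by simp [hc.1, hc.2.1, hc.2.2])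
  -- Lower bound: an invertible 6×6 submatrix in each case
  have hlow : 6 ≤ A.rank := by
    rcases hcases with h0 | h1 | h2
    · apply aux_rank_ge ![1,2,3,4,5,6] ![1,2,4,5,6,7]
      have hsub : A.submatrix ![1,2,3,4,5,6] ![1,2,4,5,6,7] =
          !![0, x₀, 0, -x₁, 0, 0;
             -x₀, 0, x₂, 0, 0, 0;
             0, 0, 0, 0, -x₀, 0;
             0, 0, 0, 0, 0, -x₀;
             0, 0, x₀, 0, -x₁, 0;
             0, 0, 0, x₀, 0, -x₂] := by
        ext i j; fin_cases i <;> fin_cases j <;> rfl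
      rw [hsub]
      apply aux_isUnit (pow_ne_zero 6 h0)
        (C := !![0, -x₀^5, -x₀^3*x₁*x₂, 0, x₀^4*x₂, 0;
                 x₀^5, 0, 0, -x₀^3*x₁*x₂, 0, x₀^4*x₁;
                 0, 0, -x₀^4*x₁, 0, x₀^5, 0;
                 0, 0, 0, -x₀^4*x₂, 0, x₀^5;
                 0, 0, -x₀^5, 0, 0, 0;
                 0, 0, 0, -x₀^5, 0, 0])
      ext i j
      fin_cases i <;> fin_cases j <;>
        simp [Matrix.mul_apply, Fin.sum_univ_six, Matrix.one_apply,
          vec6_two, vec6_three, vec6_four, vec6_five, cvv_1_1, cvv_2_1, cvv_2_2, cvv_3_1, cvv_3_2, cvv_3_3, cvv_4_1, cvv_4_2, cvv_4_3, cvv_4_4, cvv_5_1, cvv_5_2, cvv_5_3, cvv_5_4, cvv_5_5, cvv_6_1, cvv_6_2, cvv_6_3, cvv_6_4, cvv_6_5, cvv_6_6, cvv_7_1, cvv_7_2, cvv_7_3, cvv_7_4, cvv_7_5, cvv_7_6, cvv_7_7, Matrix.vecHead, Matrix.vecTail, Function.comp] <;> ring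
    · apply aux_rank_ge ![0,1,2,3,5,7] ![0,2,3,5,6,7]
      have hsub : A.submatrix ![0,1,2,3,5,7] ![0,2,3,5,6,7] =
          !![0, -x₁, 0, 0, 0, 0;
             -x₂, x₀, 0, -x₁, 0, 0;
             x₁, 0, 0, 0, 0, 0;
             0, 0, x₁, 0, -x₀, 0;
             0, 0, 0, 0, -x₁, 0;
             0, 0, 0, 0, x₂, -x₁] := by
        ext i j; fin_cases i <;> fin_cases j <;> rfl
      rw [hsub]
      apply aux_isUnit (c := -x₁^6) (by simpa using pow_ne_zero 6 h1)
        (C := !![0, 0, -x₁^5, 0, 0, 0;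
                 x₁^5, 0, 0, 0, 0, 0;
                 0, 0, 0, -x₁^5, x₀*x₁^4, 0;
                 x₀*x₁^4, x₁^5, x₁^4*x₂, 0, 0, 0;
                 0, 0, 0, 0, x₁^5, 0;
                 0, 0, 0, 0, x₁^4*x₂, x₁^5])
      ext i j
      fin_cases i <;> fin_cases j <;>
        simp [Matrix.mul_apply, Fin.sum_univ_six, Matrix.one_apply,
          vec6_two, vec6_three, vec6_four, vec6_five, cvv_1_1, cvv_2_1, cvv_2_2, cvv_3_1, cvv_3_2, cvv_3_3, cvv_4_1, cvv_4_2, cvv_4_3, cvv_4_4, cvv_5_1, cvv_5_2, cvv_5_3, cvv_5_4, cvv_5_5, cvv_6_1, cvv_6_2, cvv_6_3, cvv_6_4, cvv_6_5, cvv_6_6, cvv_7_1, cvv_7_2, cvv_7_3, cvv_7_4, cvv_7_5, cvv_7_6, cvv_7_7, Matrix.vecHead, Matrix.vecTail, Function.comp] <;> ring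
    · apply aux_rank_ge ![0,1,2,4,6,7] ![0,1,3,4,6,7]
      have hsub : A.submatrix ![0,1,2,4,6,7] ![0,1,3,4,6,7] =
          !![0, x₂, 0, 0, 0, 0;
             -x₂, 0, 0, 0, 0, 0;
             x₁, -x₀, 0, x₂, 0, 0;
             0, 0, x₂, 0, 0, -x₀;
             0, 0, 0, 0, 0, -x₂;
             0, 0, 0, 0, x₂, -x₁] := by
        ext i j; fin_cases i <;> fin_cases j <;> rfl
      rw [hsub]
      apply aux_isUnit (c := -x₂^6) (by simpa using pow_ne_zero 6 h2)
        (C := !![0, x₂^5, 0, 0, 0, 0;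
                 -x₂^5, 0, 0, 0, 0, 0;
                 0, 0, 0, -x₂^5, x₀*x₂^4, 0;
                 -x₀*x₂^4, -x₁*x₂^4, -x₂^5, 0, 0, 0;
                 0, 0, 0, 0, x₁*x₂^4, -x₂^5;
                 0, 0, 0, 0, x₂^5, 0])
      ext i j
      fin_cases i <;> fin_cases j <;>
        simp [Matrix.mul_apply, Fin.sum_univ_six, Matrix.one_apply,
          vec6_two, vec6_three, vec6_four, vec6_five, cvv_1_1, cvv_2_1, cvv_2_2, cvv_3_1, cvv_3_2, cvv_3_3, cvv_4_1, cvv_4_2, cvv_4_3, cvv_4_4, cvv_5_1, cvv_5_2, cvv_5_3, cvv_5_4, cvv_5_5, cvv_6_1, cvv_6_2, cvv_6_3, cvv_6_4, cvv_6_5, cvv_6_6, cvv_7_1, cvv_7_2, cvv_7_3, cvv_7_4, cvv_7_5, cvv_7_6, cvv_7_7, Matrix.vecHead, Matrix.vecTail, Function.comp] <;> ring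
  -- Upper bound: the kernel is at least 2-dimensional
  have hup : A.rank ≤ 6 := by
    set v : Fin 8 → ℂ := ![x₀, x₁, x₂, 0, 0, 0, 0, 0] with hv
    set w : Fin 8 → ℂ := ![-(x₁*x₂), 0, 0, x₀^2, x₁^2, x₂^2, x₀*x₁, x₀*x₂] with hw
    have hvK : v ∈ LinearMap.ker A.mulVecLin := by
      rw [LinearMap.mem_ker]
      show A.mulVec v = 0
      funext i
      fin_cases i <;>
        simp [hAdef, hv, Matrix.mulVec, dotProduct, Fin.sum_univ_eight,
          vec8_two, vec8_three, vec8_four, vec8_five, vec8_six, vec8_seven, cvv_1_1, cvv_2_1, cvv_2_2, cvv_3_1, cvv_3_2, cvv_3_3, cvv_4_1, cvv_4_2, cvv_4_3, cvv_4_4, cvv_5_1, cvv_5_2, cvv_5_3, cvv_5_4, cvv_5_5, cvv_6_1, cvv_6_2, cvv_6_3, cvv_6_4, cvv_6_5, cvv_6_6, cvv_7_1, cvv_7_2, cvv_7_3, cvv_7_4, cvv_7_5, cvv_7_6, cvv_7_7, Matrix.vecHead, Matrix.vecTail, Function.comp] <;> ring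
    have hwK : w ∈ LinearMap.ker A.mulVecLin := by
      rw [LinearMap.mem_ker]
      show A.mulVec w = 0
      funext i
      fin_cases i <;>
        simp [hAdef, hw, Matrix.mulVec, dotProduct, Fin.sum_univ_eight,
          vec8_two, vec8_three, vec8_four, vec8_five, vec8_six, vec8_seven, cvv_1_1, cvv_2_1, cvv_2_2, cvv_3_1, cvv_3_2, cvv_3_3, cvv_4_1, cvv_4_2, cvv_4_3, cvv_4_4, cvv_5_1, cvv_5_2, cvv_5_3, cvv_5_4, cvv_5_5, cvv_6_1, cvv_6_2, cvv_6_3, cvv_6_4, cvv_6_5, cvv_6_6, cvv_7_1, cvv_7_2, cvv_7_3, cvv_7_4, cvv_7_5, cvv_7_6, cvv_7_7, Matrix.vecHead, Matrix.vecTail, Function.comp] <;> ring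
    have hli : LinearIndependent ℂ
        ![(⟨v, hvK⟩ : LinearMap.ker A.mulVecLin), ⟨w, hwK⟩] := by
      rw [LinearIndependent.pair_iff]
      intro s t hst
      have hst' : s • v + t • w = 0 := by
        have := congrArg Subtype.val hst
        simpa using this
      have ht : t = 0 := by
        rcases hcases with h0 | h1 | h2
        · have h3 := congrFun hst' 3
          simp [hv, hw, vec8_three] at h3
          exact h3.resolve_right (by simpa using h0)
        · have h4 := congrFun hst' 4
          simp [hv, hw, vec8_four] at h4
          exact h4.resolve_right (by simpa using h1)
        · have h5 := congrFun hst' 5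
          simp [hv, hw, vec8_five] at h5
          exact h5.resolve_right (by simpa using h2)
      have hs : s = 0 := by
        rcases hcases with h0 | h1 | h2
        · have h0' := congrFun hst' 0
          simp [hv, hw, ht] at h0'
          exact h0'.resolve_right h0
        · have h1' := congrFun hst' 1
          simp [hv, hw, ht] at h1'
          exact h1'.resolve_right h1
        · have h2' := congrFun hst' 2
          simp [hv, hw, ht, vec8_two] at h2'
          exact h2'.resolve_right h2
      exact ⟨hs, ht⟩
    have hker : 2 ≤ Module.finrank ℂ (LinearMap.ker A.mulVecLin) := by
      simpa using hli.fintype_card_le_finrank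
    have hrn := LinearMap.finrank_range_add_finrank_ker A.mulVecLin
    have hpi : Module.finrank ℂ (Fin 8 → ℂ) = 8 := by simp
    rw [hpi] at hrn
    have : A.rank = Module.finrank ℂ (LinearMap.range A.mulVecLin) := rfl
    omega
  omega
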